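/- Under the hypotheses of the multiplicative reverse triangle inequality in a Hilbert 𝔄-module (e₁,…,e_m mutually orthogonal with ‖eₖ‖=1, r_k, ρ_k ∈ ℝ with ∑ₖ(r_k²+ρ_k²) ≠ 0, and r_k²‖xⱼ‖ ≤ Re⟨r_k e_k,xⱼ⟩, ρ_k²‖xⱼ‖ ≤ Im⟨ρ_k e_k,xⱼ⟩ for all j,k), equality (∑ₖ(r_k²+ρ_k²))^{1/2} ∑ⱼ‖xⱼ‖ = ‖∑ⱼ xⱼ‖ holds if and only if ∑ⱼ xⱼ = (∑ⱼ‖xⱼ‖) · ∑ₖ (r_k + iρ_k)·eₖ. -/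

import Mathlib

open scoped RightActions

/-- Hermitian real part of an element of a complex *-algebra. -/
noncomputable def cre {A : Type*} [Ring A] [StarRing A] [Module ℂ A] (a : A) : A :=
  (2 : ℂ)⁻¹ • (a + star a)

/-- Hermitian imaginary part of an element of a complex *-algebra. -/
noncomputable def cim {A : Type*} [Ring A] [StarRing A] [Module ℂ A] (a : A) : A :=
  (2 * Complex.I)⁻¹ • (a - star a)

/-- The Hilbert C⋆-module class as it stood in the older Mathlib (right action of `A` through
`Aᵐᵒᵖ`, inner product `A`-linear on the right in the second argument). -/
class CStarModuleRight (A E : Type*) [NonUnitalSemiring A] [StarRing A] [Module ℂ A]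
    [AddCommGroup E] [Module ℂ E] [PartialOrder A] [SMul Aᵐᵒᵖ E] [Norm A] [Norm E]
    extends Inner A E where
  inner_add_right {x} {y} {z} : inner x (y + z) = inner x y + inner x z
  inner_self_nonneg {x} : 0 ≤ inner x x
  inner_self {x} : inner x x = 0 ↔ x = 0
  inner_op_smul_right {a : A} {x y : E} : inner x (y <• a) = inner x y * a
  inner_smul_right_complex {z : ℂ} {x} {y} : inner x (z • y) = z • inner x y
  star_inner x y : star (inner x y) = inner y x
  norm_eq_sqrt_norm_inner_self x : ‖x‖ = √‖inner x x‖

namespace CStarModuleRight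

variable {A E : Type*} [CStarAlgebra A] [PartialOrder A] [StarOrderedRing A]
    [AddCommGroup E] [Module ℂ E] [SMul Aᵐᵒᵖ E] [Norm E] [CStarModuleRight A E]

/-- The inner product as an additive map in the second argument. -/
def innerR (x : E) : E →+ A where
  toFun y := inner A x y
  map_zero' := by
    have h := inner_add_right (A := A) (x := x) (y := (0:E)) (z := 0)
    simpa using h
  map_add' _ _ := inner_add_right

lemma inner_sum_right {ι : Type*} {s : Finset ι} {x : E} {f : ι → E} :
    inner A x (∑ i ∈ s, f i) = ∑ i ∈ s, inner A x (f i) :=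
  map_sum (innerR (A := A) x) f s

lemma inner_sum_left {ι : Type*} {s : Finset ι} {f : ι → E} {y : E} :
    inner A (∑ i ∈ s, f i) y = ∑ i ∈ s, inner A (f i) y := by
  rw [← star_inner y, inner_sum_right, star_sum]
  exact Finset.sum_congr rfl fun i _ => star_inner _ _

lemma inner_smul_left_complex {z : ℂ} {x y : E} :
    inner A (z • x) y = star z • inner A x y := by
  rw [← star_inner y, inner_smul_right_complex, star_smul, star_inner]

lemma inner_sub_right {x y z : E} : inner A x (y - z) = inner A x y - inner A x z :=
  map_sub (innerR (A := A) x) y z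

lemma inner_sub_left {x y z : E} : inner A (x - y) z = inner A x z - inner A y z := by
  rw [← star_inner z, inner_sub_right, star_sub, star_inner, star_inner]

lemma isSelfAdjoint_inner_self {x : E} : IsSelfAdjoint (inner A x x) := star_inner x x

lemma norm_sq_eq {x : E} : ‖x‖ ^ 2 = ‖inner A x x‖ := by
  rw [norm_eq_sqrt_norm_inner_self (A := A) x, Real.sq_sqrt (_root_.norm_nonneg _)]

lemma norm_nonneg {A : Type*} [CStarAlgebra A] [PartialOrder A] [StarOrderedRing A] [SMul Aᵐᵒᵖ E]
    [CStarModuleRight A E] {x : E} : 0 ≤ ‖x‖ := by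
  rw [norm_eq_sqrt_norm_inner_self (A := A) x]
  exact Real.sqrt_nonneg _

lemma norm_zero {A : Type*} [CStarAlgebra A] [PartialOrder A] [StarOrderedRing A] [SMul Aᵐᵒᵖ E]
    [CStarModuleRight A E] : ‖(0:E)‖ = 0 := by
  rw [norm_eq_sqrt_norm_inner_self (A := A), (inner_self (A := A)).mpr rfl]
  simp

end CStarModuleRight

section Aux

variable {A E : Type*} [CStarAlgebra A] [PartialOrder A] [StarOrderedRing A]
    [AddCommGroup E] [Module ℂ E] [SMul Aᵐᵒᵖ E] [Norm E] [CStarModuleRight A E]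

lemma cre_sum' {ι : Type*} (s : Finset ι) (f : ι → A) :
    cre (∑ i ∈ s, f i) = ∑ i ∈ s, cre (f i) := by
  simp [cre, star_sum, ← Finset.sum_add_distrib, Finset.smul_sum]

lemma key_pt (r ρ : ℝ) (e x : E) :
    cre ((inner A (((r:ℂ) + (ρ:ℂ)*Complex.I) • e) x : A)) =
      cre (inner A ((r:ℂ)•e) x) + cim (inner A ((ρ:ℂ)•e) x) := by
  simp only [cre, cim, CStarModuleRight.inner_smul_left_complex, star_smul, smul_add, smul_sub,
    smul_smul, RCLike.star_def, map_add, map_mul, Complex.conj_ofReal, Complex.conj_I,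
    map_neg, Complex.inv_I, mul_inv]
  module

lemma selfadj_le_norm_smul_one (a : A) (h : IsSelfAdjoint a) : a ≤ ‖a‖ • 1 := by
  simpa [Algebra.algebraMap_eq_smul_one] using h.le_algebraMap_norm_self

end Aux

theorem stmt6 {A E : Type*} [CStarAlgebra A] [PartialOrder A] [StarOrderedRing A]
    [AddCommGroup E] [Module ℂ E] [SMul Aᵐᵒᵖ E] [Norm E] [CStarModuleRight A E]
    (m n : ℕ) (e : Fin m → E) (x : Fin n → E)
    (horth : ∀ i j, i ≠ j → (inner A (e i) (e j) : A) = 0) (hnorm : ∀ k, ‖e k‖ = 1)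
    (r ρ : Fin m → ℝ) (hS : ∑ k, (r k ^ 2 + ρ k ^ 2) ≠ 0)
    (h₁ : ∀ j k, (r k ^ 2 * ‖x j‖) • (1 : A) ≤ cre (inner A ((r k : ℂ) • e k) (x j) : A))
    (h₂ : ∀ j k, (ρ k ^ 2 * ‖x j‖) • (1 : A) ≤ cim (inner A ((ρ k : ℂ) • e k) (x j) : A)) :
    Real.sqrt (∑ k, (r k ^ 2 + ρ k ^ 2)) * ∑ j, ‖x j‖ = ‖∑ j, x j‖ ↔
      ∑ j, x j = ((∑ j, ‖x j‖ : ℝ) : ℂ) • ∑ k, ((r k : ℂ) + (ρ k : ℂ) * Complex.I) • e k := by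
  classical
  set S := ∑ k, (r k ^ 2 + ρ k ^ 2) with hSdef
  set t := ∑ j, ‖x j‖ with htdef
  set X := ∑ j, x j with hXdef
  set v := ∑ k, ((r k : ℂ) + (ρ k : ℂ) * Complex.I) • e k with hvdef
  rcases subsingleton_or_nontrivial A with hA | hA
  · have hx : ∀ j, x j = 0 := fun j =>
      (CStarModuleRight.inner_self (A := A)).mp (Subsingleton.elim _ _)
    have hz : ∀ j, ‖x j‖ = 0 := fun j => by rw [hx j]; exact CStarModuleRight.norm_zero (A := A)
    constructor <;> intro _
    · rw [hXdef, hvdef, htdef]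
      simp [hx, hz, CStarModuleRight.norm_zero (A := A) (E := E)]
    · rw [hXdef, htdef]
      have : (∑ j, x j : E) = 0 := by simp [hx]
      rw [htdef] at *
      simp [hz, this, CStarModuleRight.norm_zero (A := A) (E := E)]
  have hS0 : 0 ≤ S := Finset.sum_nonneg fun k _ => by positivity
  have ht0 : 0 ≤ t := Finset.sum_nonneg fun j _ => CStarModuleRight.norm_nonneg (E := E) (A := A)
  -- pointwise key inequality
  have hpt : ∀ j k, ((r k ^ 2 + ρ k ^ 2) * ‖x j‖) • (1:A) ≤
      cre (inner A (((r k:ℂ) + (ρ k:ℂ)*Complex.I) • e k) (x j) : A) := by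
    intro j k
    rw [key_pt]
    calc ((r k ^ 2 + ρ k ^ 2) * ‖x j‖) • (1:A)
        = (r k^2 * ‖x j‖) • (1:A) + (ρ k^2 * ‖x j‖) • 1 := by
          rw [← add_smul, ← add_mul]
      _ ≤ _ := add_le_add (h₁ j k) (h₂ j k)
  -- key global inequality
  have hkey : (S * t) • (1:A) ≤ cre (inner A v X : A) := by
    have hinner : (inner A v X : A)
        = ∑ k, ∑ j, inner A (((r k:ℂ)+(ρ k:ℂ)*Complex.I) • e k) (x j) := by
      rw [hvdef, hXdef, CStarModuleRight.inner_sum_left]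
      exact Finset.sum_congr rfl fun k _ => CStarModuleRight.inner_sum_right
    rw [hinner, cre_sum']
    calc (S*t) • (1:A) = ∑ k, ∑ j, ((r k^2+ρ k^2) * ‖x j‖) • (1:A) := by
          rw [hSdef, htdef]
          simp only [Finset.sum_mul, Finset.mul_sum, Finset.sum_smul]
          rw [Finset.sum_comm]
      _ ≤ ∑ k, cre (∑ j, (inner A (((r k:ℂ)+(ρ k:ℂ)*Complex.I) • e k) (x j) : A)) := by
          refine Finset.sum_le_sum fun k _ => ?_
          rw [cre_sum']
          exact Finset.sum_le_sum fun j _ => hpt j k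
  -- inner A v v
  have hvvsum : (inner A v v : A) = ∑ k, (r k^2 + ρ k^2 : ℝ) • (inner A (e k) (e k) : A) := by
    rw [hvdef, CStarModuleRight.inner_sum_left]
    refine Finset.sum_congr rfl fun i _ => ?_
    rw [CStarModuleRight.inner_sum_right, Finset.sum_eq_single i]
    · rw [CStarModuleRight.inner_smul_left_complex, CStarModuleRight.inner_smul_right_complex, smul_smul]
      have hc : (starRingEnd ℂ) ((r i:ℂ)+(ρ i:ℂ)*Complex.I) * ((r i:ℂ)+(ρ i:ℂ)*Complex.I)
          = (((r i^2 + ρ i^2 : ℝ)) : ℂ) := by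
        rw [map_add, map_mul, Complex.conj_ofReal, Complex.conj_ofReal, Complex.conj_I]
        push_cast
        linear_combination (-(ρ i:ℂ)^2) * Complex.I_sq
      rw [RCLike.star_def, hc, Complex.coe_smul]
    · intro b _ hb
      rw [CStarModuleRight.inner_smul_left_complex, CStarModuleRight.inner_smul_right_complex,
        horth i b (Ne.symm hb)]
      simp
    · intro h; exact absurd (Finset.mem_univ i) h
  have hvvn : ‖(inner A v v : A)‖ ≤ S := by
    rw [hvvsum, hSdef]
    refine (norm_sum_le _ _).trans (Finset.sum_le_sum fun k _ => ?_)
    rw [norm_smul]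
    have h1 : ‖(inner A (e k) (e k) : A)‖ = 1 := by
      rw [← CStarModuleRight.norm_sq_eq, hnorm k, one_pow]
    rw [h1, mul_one, Real.norm_of_nonneg (by positivity)]
  constructor
  · -- forward
    intro heq
    have hXn : ‖X‖^2 = S * t^2 := by
      rw [← heq, mul_pow, Real.sq_sqrt hS0]
    have hXX : (inner A X X : A) ≤ (S * t^2) • 1 := by
      calc (inner A X X : A) ≤ ‖(inner A X X : A)‖ • 1 :=
            selfadj_le_norm_smul_one _ (CStarModuleRight.isSelfAdjoint_inner_self)
        _ = (S * t^2) • 1 := by rw [← CStarModuleRight.norm_sq_eq, hXn]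
    have hvv1 : (inner A v v : A) ≤ S • 1 := by
      calc (inner A v v : A) ≤ ‖(inner A v v : A)‖ • 1 :=
            selfadj_le_norm_smul_one _ (CStarModuleRight.isSelfAdjoint_inner_self)
        _ ≤ S • 1 := by
            rw [← sub_nonneg, ← sub_smul]
            exact smul_nonneg (by linarith) zero_le_one
    set y := X - ((t:ℝ):ℂ) • v with hydef
    have hy : (inner A y y : A)
        = inner A X X - (2*t) • cre (inner A v X : A) + (t^2 : ℝ) • (inner A v v : A) := by
      have hXv : (inner A X v : A) = star (inner A v X : A) := (CStarModuleRight.star_inner v X).symm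
      simp only [hydef, CStarModuleRight.inner_sub_left, CStarModuleRight.inner_sub_right,
        CStarModuleRight.inner_smul_left_complex, CStarModuleRight.inner_smul_right_complex,
        hXv, cre, RCLike.star_def, Complex.conj_ofReal, ← Complex.coe_smul]
      push_cast
      module
    have hyle : (inner A y y : A) ≤ 0 := by
      rw [hy]
      have h2 : (2*t) • ((S*t) • (1:A)) ≤ (2*t) • cre (inner A v X : A) :=
        smul_le_smul_of_nonneg_left hkey (by positivity)
      have h3 : (t^2 : ℝ) • (inner A v v : A) ≤ (t^2 : ℝ) • (S • (1:A)) :=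
        smul_le_smul_of_nonneg_left hvv1 (sq_nonneg t)
      calc inner A X X - (2*t) • cre (inner A v X : A) + (t^2 : ℝ) • (inner A v v : A)
          ≤ (S*t^2) • (1:A) - (2*t) • ((S*t) • (1:A)) + (t^2:ℝ) • (S • (1:A)) :=
            add_le_add (sub_le_sub hXX h2) h3
        _ = 0 := by
            simp only [smul_smul, ← sub_smul, ← add_smul]
            rw [show S*t^2 - 2*t*(S*t) + t^2*S = 0 by ring, zero_smul]
    have hy0 : y = 0 :=
      CStarModuleRight.inner_self.mp (le_antisymm hyle CStarModuleRight.inner_self_nonneg)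
    rw [hydef, sub_eq_zero] at hy0
    exact hy0
  · -- backward
    intro heq
    have ha : cre (inner A v X : A) = t • (inner A v v : A) := by
      rw [heq, CStarModuleRight.inner_smul_right_complex]
      have hsa : star (inner A v v : A) = inner A v v := CStarModuleRight.star_inner v v
      simp only [cre, star_smul, RCLike.star_def, Complex.conj_ofReal, hsa,
        ← Complex.coe_smul]
      module
    have hnvv : t * ‖(inner A v v : A)‖ = S * t := by
      have h1 : S * t ≤ t * ‖(inner A v v : A)‖ := by
        have hk := hkey
        rw [ha] at hk
        calc S*t = ‖(S*t) • (1:A)‖ := by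
              rw [norm_smul, norm_one, Real.norm_of_nonneg (by positivity), mul_one]
          _ ≤ ‖t • (inner A v v : A)‖ :=
              CStarAlgebra.norm_le_norm_of_nonneg_of_le
                (smul_nonneg (mul_nonneg hS0 ht0) zero_le_one) hk
          _ = t * ‖(inner A v v : A)‖ := by rw [norm_smul, Real.norm_of_nonneg ht0]
      have h2 : t * ‖(inner A v v : A)‖ ≤ t * S := mul_le_mul_of_nonneg_left hvvn ht0
      linarith
    have hXn : ‖X‖^2 = S * t^2 := by
      rw [CStarModuleRight.norm_sq_eq (A := A), heq, CStarModuleRight.inner_smul_left_complex,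
        CStarModuleRight.inner_smul_right_complex, smul_smul, RCLike.star_def,
        Complex.conj_ofReal, ← Complex.ofReal_mul, Complex.coe_smul,
        norm_smul, Real.norm_of_nonneg (by positivity)]
      nlinarith
    have hn0 : 0 ≤ ‖X‖ := CStarModuleRight.norm_nonneg (E := E) (A := A)
    have hs0 : 0 ≤ Real.sqrt S * t := mul_nonneg (Real.sqrt_nonneg S) ht0
    have hsq : (Real.sqrt S * t)^2 = ‖X‖^2 := by
      rw [hXn, mul_pow, Real.sq_sqrt hS0]
    nlinarith [sq_nonneg (Real.sqrt S * t - ‖X‖), sq_nonneg (Real.sqrt S * t + ‖X‖)]
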